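/- Call an EL-chart A normalised if Σ_{b ∈ B_(0)} |b| = n(n−1)/2, where B_(0) = (A ∖ (A+n)) ∩ ℤ_(0). Then every EL-chart is equivalent to exactly one normalised EL-chart. -/
import Mathlib


namespace ELChart

/-- An EL-chart (for parameters `d`, `n` and `mfun τ = m_τ`): a non-empty subset
`A ⊆ ℤ^(d) = (ℤ/dℤ) × ℤ` which is bounded below and satisfies `f(A) ⊆ A` and `A + n ⊆ A`,
where `f (τ, x) = (τ + 1, x + m_τ)`. -/
def IsChart (d n : ℕ) (mfun : ZMod d → ℤ) (A : Set (ZMod d × ℤ)) : Prop :=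
  A.Nonempty ∧ (∃ c : ℤ, ∀ p ∈ A, c ≤ p.2) ∧
    (∀ p ∈ A, ((p.1 + 1 : ZMod d), p.2 + mfun p.1) ∈ A) ∧
    (∀ p ∈ A, (p.1, p.2 + (n : ℤ)) ∈ A)

/-- `B = A ∖ (A + n)`. -/
def Bset (d n : ℕ) (A : Set (ZMod d × ℤ)) : Set (ZMod d × ℤ) :=
  {p | p ∈ A ∧ (p.1, p.2 - (n : ℤ)) ∉ A}

/-- The shift `A + z` of a subset of `ℤ^(d)`. -/
def shift (d : ℕ) (A : Set (ZMod d × ℤ)) (z : ℤ) : Set (ZMod d × ℤ) :=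
  (fun p : ZMod d × ℤ => (p.1, p.2 + z)) '' A

/-- Two EL-charts are equivalent if they differ by a shift. -/
def ChartEquiv (d : ℕ) (A A' : Set (ZMod d × ℤ)) : Prop :=
  ∃ z : ℤ, shift d A z = A'

/-- The sequence `b 0, b 1, …` associated with an EL-chart: `b 0 = min B_(0)` and `b (i+1)`
is the unique element of `B` of the form `f (b i) − c * n` with `c` a non-negative integer. -/
noncomputable def bseq (d n : ℕ) (mfun : ZMod d → ℤ) (A : Set (ZMod d × ℤ)) :
    ℕ → ZMod d × ℤ
  | 0 => ((0 : ZMod d), sInf {x : ℤ | ((0 : ZMod d), x) ∈ Bset d n A})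
  | i + 1 =>
    ((bseq d n mfun A i).1 + 1,
      sInf {y : ℤ | ((bseq d n mfun A i).1 + 1, y) ∈ Bset d n A ∧
        ((bseq d n mfun A i).2 + mfun (bseq d n mfun A i).1 - y) % (n : ℤ) = 0 ∧
        y ≤ (bseq d n mfun A i).2 + mfun (bseq d n mfun A i).1})

/-- The entry `μ'_k` (for `1 ≤ k ≤ d*n`) of the type of an EL-chart: the non-negative integer
with `b k = f (b (k-1)) − μ'_k * n`. -/
noncomputable def typeInt (d n : ℕ) (mfun : ZMod d → ℤ) (A : Set (ZMod d × ℤ)) (k : ℕ) : ℤ :=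
  ((bseq d n mfun A (k - 1)).2 + mfun (bseq d n mfun A (k - 1)).1
    - (bseq d n mfun A k).2) / (n : ℤ)

/-- The type of an EL-chart as a tuple: `μ'_{τ,i} = μ'_{τ + (i−1)d}` where the `Fin d`-index
`τ` corresponds to `τ + 1 ∈ {1, …, d}` and the `Fin n`-index `i` to `i + 1 ∈ {1, …, n}`. -/
noncomputable def typeTup (d n : ℕ) (mfun : ZMod d → ℤ) (A : Set (ZMod d × ℤ)) :
    Fin d → Fin n → ℤ :=
  fun τ i => typeInt d n mfun A (τ.val + 1 + i.val * d)

/-- The entry `μ'_{τ',i'}` of the type of an EL-chart attached to an element `p = b_{τ',i'}`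
of `B`: if `q ∈ B` is the (unique) predecessor of `p`, i.e. the element with
`p = f q − c * n` for a non-negative integer `c`, then `muOf p = c`. -/
noncomputable def muOf (d n : ℕ) (mfun : ZMod d → ℤ) (A : Set (ZMod d × ℤ))
    (p : ZMod d × ℤ) : ℤ :=
  (sInf {y : ℤ | ((p.1 - 1 : ZMod d), y) ∈ Bset d n A ∧
      (y + mfun (p.1 - 1) - p.2) % (n : ℤ) = 0 ∧ p.2 ≤ y + mfun (p.1 - 1)}
    + mfun (p.1 - 1) - p.2) / (n : ℤ)

/-- The `i`-th largest element `b̃_{τ,i}` of `B_(τ)` (1-indexed: `i ∈ {1, …, n}`): the unique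
element of `B_(τ)` with exactly `i − 1` elements of `B_(τ)` above it. -/
noncomputable def btilde (d n : ℕ) (A : Set (ZMod d × ℤ)) (τ : ZMod d) (i : ℕ) : ℤ :=
  sInf {y : ℤ | (τ, y) ∈ Bset d n A ∧
    Set.ncard {z : ℤ | (τ, z) ∈ Bset d n A ∧ y < z} = i - 1}

/-- The cotype of an EL-chart as a tuple: `μ̃_{τ,i} = μ'_{τ',i'}` where `b̃_{τ,i} = b_{τ',i'}`,
i.e. the type entry attached to the `i`-th largest element of `B_(τ)`. -/
noncomputable def cotypeTup (d n : ℕ) (mfun : ZMod d → ℤ) (A : Set (ZMod d × ℤ)) :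
    Fin d → Fin n → ℤ :=
  fun τ i =>
    muOf d n mfun A (((τ.val + 1 : ℕ) : ZMod d),
      btilde d n A ((τ.val + 1 : ℕ) : ZMod d) (i.val + 1))

/-- Membership in `P_{m,n,d}`: all entries are non-negative and
`Σ_{i=1}^k Σ_{τ=1}^d μ_{τ,i} ≤ k*m/n` for `k = 1, …, n`, with equality for `k = n`. -/
def memP (d n m : ℕ) (μ : Fin d → Fin n → ℤ) : Prop :=
  (∀ τ i, 0 ≤ μ τ i) ∧
    (∀ k : ℕ, 1 ≤ k → k ≤ n →
      (n : ℤ) * ∑ τ : Fin d, ∑ i : Fin n, (if i.val + 1 ≤ k then μ τ i else 0)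
        ≤ (k : ℤ) * (m : ℤ)) ∧
    (∑ τ : Fin d, ∑ i : Fin n, μ τ i) = (m : ℤ)

/-- An EL-chart is normalised if `Σ_{b ∈ B_(0)} |b| = n(n−1)/2`. -/
def IsNormalised (d n : ℕ) (A : Set (ZMod d × ℤ)) : Prop :=
  ∑ᶠ x ∈ {x : ℤ | ((0 : ZMod d), x) ∈ Bset d n A}, x = ((n * (n - 1) / 2 : ℕ) : ℤ)

/-- The dominant rearrangement of a tuple: each component is sorted weakly decreasingly. -/
def domOf (d n : ℕ) (μ : Fin d → Fin n → ℤ) : Fin d → Fin n → ℤ :=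
  fun τ i => μ τ (Tuple.sort (fun j => -(μ τ j)) i)

/-- A tuple is dominant if each of its `d` components is weakly decreasing. -/
def IsDom (d n : ℕ) (μ : Fin d → Fin n → ℤ) : Prop :=
  ∀ τ : Fin d, ∀ i j : Fin n, i ≤ j → μ τ j ≤ μ τ i

end ELChart

open ELChart


section AuxEL

private lemma aux_add_nat_mul (S : Set ℤ) (c : ℕ) (hc : ∀ x ∈ S, x + (c : ℤ) ∈ S) :
    ∀ (k : ℕ), ∀ x ∈ S, x + (k : ℤ) * (c : ℤ) ∈ S := by
  intro k
  induction k with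
  | zero => intro x hx; simpa using hx
  | succ k ih =>
    intro x hx
    have h1 := hc _ (ih x hx)
    have e : x + ((k : ℕ) + 1 : ℤ) * (c : ℤ) = x + (k : ℤ) * c + c := by ring
    rw [show (((k+1 : ℕ)) : ℤ) = ((k : ℕ) : ℤ) + 1 by push_cast; ring, e]
    exact h1

private lemma aux_add_int_mul (S : Set ℤ) (c : ℕ) (hc : ∀ x ∈ S, x + (c : ℤ) ∈ S)
    (t : ℤ) (ht : 0 ≤ t) : ∀ x ∈ S, x + t * (c : ℤ) ∈ S := by
  intro x hx
  have := aux_add_nat_mul S c hc t.toNat x hx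
  rwa [Int.toNat_of_nonneg ht] at this

private lemma key_g (n m : ℕ) (hn : 0 < n) (hmn : Nat.Coprime m n)
    (S : Set ℤ) (hne : S.Nonempty) (cbd : ℤ) (hbd : ∀ x ∈ S, cbd ≤ x)
    (hstep : ∀ x ∈ S, x + (n : ℤ) ∈ S) (hmstep : ∀ x ∈ S, x + (m : ℤ) ∈ S) :
    ∃ g : ZMod n → ℤ,
      {x : ℤ | x ∈ S ∧ x - (n : ℤ) ∉ S} = Set.range g ∧
      ∀ r : ZMod n, ((g r : ℤ) : ZMod n) = r := by
  haveI : NeZero n := ⟨hn.ne'⟩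
  have hn' : (0 : ℤ) < (n : ℤ) := by exact_mod_cast hn
  have hTne : ∀ r : ZMod n, ∃ x : ℤ, x ∈ S ∧ ((x : ZMod n) = r) := by
    intro r
    obtain ⟨a, ha⟩ := hne
    have hu : IsUnit ((m : ℕ) : ZMod n) := (ZMod.isUnit_iff_coprime m n).2 hmn
    set k : ℕ := ((r - (a : ZMod n)) * ((m : ZMod n))⁻¹).val with hk
    refine ⟨a + (k : ℤ) * (m : ℤ), aux_add_nat_mul S m hmstep k a ha, ?_⟩
    have hkc : ((k : ℕ) : ZMod n) = (r - (a : ZMod n)) * ((m : ZMod n))⁻¹ :=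
      ZMod.natCast_rightInverse _
    push_cast
    rw [hkc, mul_assoc, ZMod.inv_mul_of_unit _ hu]
    ring
  have hTL : ∀ r : ZMod n, ∃ a : ℤ, (a ∈ S ∧ (a : ZMod n) = r) ∧
      ∀ x : ℤ, (x ∈ S ∧ (x : ZMod n) = r) → a ≤ x := by
    intro r
    obtain ⟨lb, h1, h2⟩ := Int.exists_least_of_bdd
      (P := fun x => x ∈ S ∧ (x : ZMod n) = r)
      ⟨cbd, fun z hz => hbd z hz.1⟩ (hTne r)
    exact ⟨lb, h1, h2⟩
  choose g hg hmin using hTL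
  refine ⟨g, ?_, fun r => (hg r).2⟩
  ext x
  simp only [Set.mem_setOf_eq, Set.mem_range]
  constructor
  · rintro ⟨hxS, hxn⟩
    refine ⟨((x : ℤ) : ZMod n), ?_⟩
    set r := ((x : ℤ) : ZMod n) with hr
    have hle : g r ≤ x := hmin r x ⟨hxS, rfl⟩
    have hcast : ((g r : ℤ) : ZMod n) = ((x : ℤ) : ZMod n) := (hg r).2
    have hdvd : (n : ℤ) ∣ x - g r :=
      Int.ModEq.dvd ((ZMod.intCast_eq_intCast_iff _ _ _).1 hcast)
    obtain ⟨t, ht⟩ := hdvd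
    by_contra hne'
    have hlt : g r < x := lt_of_le_of_ne hle hne'
    have ht1 : 1 ≤ t := by nlinarith
    have hxe : x - (n : ℤ) = g r + (t - 1) * (n : ℤ) := by linear_combination ht
    have hS : g r + (t - 1) * (n : ℤ) ∈ S :=
      aux_add_int_mul S n hstep (t - 1) (by linarith) _ (hg r).1
    exact hxn (hxe ▸ hS)
  · rintro ⟨r, rfl⟩
    refine ⟨(hg r).1, fun hmem => ?_⟩
    have hcast : ((g r - (n : ℤ) : ℤ) : ZMod n) = r := by
      push_cast
      rw [(hg r).2, ZMod.natCast_self]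
      ring
    have := hmin r (g r - (n : ℤ)) ⟨hmem, hcast⟩
    linarith

private lemma cast_fin_bijective (n : ℕ) [NeZero n] :
    Function.Bijective (fun i : Fin n => (((i : ℕ) : ZMod n))) := by
  constructor
  · intro i j h
    apply Fin.ext
    have h2 := congrArg ZMod.val h
    simpa [ZMod.val_cast_of_lt i.isLt, ZMod.val_cast_of_lt j.isLt] using h2
  · intro r
    exact ⟨⟨r.val, r.val_lt⟩, ZMod.natCast_rightInverse r⟩

private lemma sum_zmod_val (n : ℕ) [NeZero n] :
    ∑ r : ZMod n, ((r.val : ℕ) : ℤ) = ((n * (n - 1) / 2 : ℕ) : ℤ) := by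
  rw [← Fintype.sum_bijective _ (cast_fin_bijective n)
      (fun i : Fin n => (((i : ℕ) : ℕ) : ℤ)) (fun r : ZMod n => ((r.val : ℕ) : ℤ))
      (fun i => by simp [ZMod.val_cast_of_lt i.isLt])]
  rw [Fin.sum_univ_eq_sum_range (fun i => ((i : ℕ) : ℤ)) n, ← Nat.cast_sum,
    Finset.sum_range_id]

private lemma sum_range_cast {d : ℕ} [NeZero d] (mfun : ZMod d → ℤ) :
    ∑ j ∈ Finset.range d, mfun ((j : ℕ) : ZMod d) = ∑ τ : ZMod d, mfun τ := by
  rw [← Fin.sum_univ_eq_sum_range (fun j => mfun ((j : ℕ) : ZMod d)) d]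
  exact Fintype.sum_bijective _ (cast_fin_bijective d) _ _ (fun i => rfl)

end AuxEL

/-- Every EL-chart is equivalent to exactly one normalised EL-chart
(`A` is normalised if `Σ_{b ∈ B_(0)} |b| = n(n−1)/2`). -/
theorem exists_unique_normalised
    (d n m : ℕ) [NeZero d] (hn : 0 < n) (hm : 0 < m) (hmn : Nat.Coprime m n)
    (mfun : ZMod d → ℤ) (hsum : ∑ τ : ZMod d, mfun τ = (m : ℤ))
    (A : Set (ZMod d × ℤ)) (hA : IsChart d n mfun A) :
    ∃! A' : Set (ZMod d × ℤ), ChartEquiv d A A' ∧ IsNormalised d n A' := by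
  haveI : NeZero n := ⟨hn.ne'⟩
  have hn' : (0 : ℤ) < (n : ℤ) := by exact_mod_cast hn
  obtain ⟨hne, ⟨cbd, hbd⟩, hf, hplus⟩ := hA
  -- iterate f
  have hiter : ∀ (k : ℕ) (p : ZMod d × ℤ), p ∈ A →
      ((p.1 + ((k : ℕ) : ZMod d),
        p.2 + ∑ j ∈ Finset.range k, mfun (p.1 + ((j : ℕ) : ZMod d))) ∈ A) := by
    intro k
    induction k with
    | zero => intro p hp; simpa using hp
    | succ k ih =>
      intro p hp
      have h1 := hf _ (ih p hp)
      simp only at h1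
      have e1 : (((k + 1 : ℕ)) : ZMod d) = ((k : ℕ) : ZMod d) + 1 := by push_cast; ring
      have e2 : p.1 + (((k : ℕ) : ZMod d) + 1) = p.1 + ((k : ℕ) : ZMod d) + 1 := by ring
      have e3 : p.2 + (∑ j ∈ Finset.range k, mfun (p.1 + ((j : ℕ) : ZMod d))
            + mfun (p.1 + ((k : ℕ) : ZMod d)))
          = p.2 + ∑ j ∈ Finset.range k, mfun (p.1 + ((j : ℕ) : ZMod d))
            + mfun (p.1 + ((k : ℕ) : ZMod d)) := by ring
      rw [e1, Finset.sum_range_succ, e2, e3]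
      exact h1
  set S : Set ℤ := {x : ℤ | ((0 : ZMod d), x) ∈ A} with hS
  have hSne : S.Nonempty := by
    obtain ⟨p, hp⟩ := hne
    have h1 := hiter ((-p.1).val) p hp
    have e : p.1 + (((-p.1).val : ℕ) : ZMod d) = 0 := by
      rw [ZMod.natCast_rightInverse (-p.1)]; ring
    rw [e] at h1
    exact ⟨_, h1⟩
  have hSbd : ∀ x ∈ S, cbd ≤ x := fun x hx => hbd _ hx
  have hSstep : ∀ x ∈ S, x + (n : ℤ) ∈ S := fun x hx => hplus _ hx
  have hSm : ∀ x ∈ S, x + (m : ℤ) ∈ S := by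
    intro x hx
    have h1 := hiter d ((0 : ZMod d), x) hx
    simp only [ZMod.natCast_self, add_zero, zero_add] at h1
    rwa [sum_range_cast mfun, hsum] at h1
  obtain ⟨g, hgset, hgcast⟩ := key_g n m hn hmn S hSne cbd hSbd hSstep hSm
  have hginj : Function.Injective g := by
    intro r s h
    rw [← hgcast r, ← hgcast s, h]
  -- B_(0) of a shift
  have hshiftmem : ∀ (z : ℤ) (τ : ZMod d) (x : ℤ),
      (τ, x) ∈ shift d A z ↔ (τ, x - z) ∈ A := by
    intro z τ x
    simp only [shift, Set.mem_image, Prod.mk.injEq]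
    constructor
    · rintro ⟨⟨a, b⟩, hp, h1, h2⟩
      have hb : b = x - z := by linarith
      rw [← h1, ← hb]
      exact hp
    · intro hmem
      exact ⟨(τ, x - z), hmem, rfl, by ring⟩
  have hB0 : ∀ z : ℤ, {x : ℤ | ((0 : ZMod d), x) ∈ Bset d n (shift d A z)}
      = Set.range (fun r : ZMod n => g r + z) := by
    intro z
    ext x
    simp only [Bset, Set.mem_setOf_eq, hshiftmem, Set.mem_range]
    have e : x - (n : ℤ) - z = x - z - (n : ℤ) := by ring
    rw [e]
    have hx : ((0 : ZMod d), x - z) ∈ A ∧ ((0 : ZMod d), x - z - (n : ℤ)) ∉ A ↔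
        (x - z) ∈ Set.range g := by
      rw [← hgset]; rfl
    rw [hx]
    simp only [Set.mem_range]
    constructor
    · rintro ⟨r, hr⟩; exact ⟨r, by linarith⟩
    · rintro ⟨r, hr⟩; exact ⟨r, by linarith⟩
  have hsumz : ∀ z : ℤ, (∑ᶠ x ∈ {x : ℤ | ((0 : ZMod d), x) ∈ Bset d n (shift d A z)}, x)
      = (∑ r : ZMod n, g r) + (n : ℤ) * z := by
    intro z
    rw [hB0 z]
    have hinj : Function.Injective (fun r : ZMod n => g r + z) := by
      intro a b h
      simp only at h
      exact hginj (by linarith)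
    rw [finsum_mem_range hinj, finsum_eq_sum_of_fintype, Finset.sum_add_distrib,
      Finset.sum_const, Finset.card_univ, ZMod.card, nsmul_eq_mul]
  have hdvd : (n : ℤ) ∣ (∑ r : ZMod n, g r) - ((n * (n - 1) / 2 : ℕ) : ℤ) := by
    rw [← sum_zmod_val n, ← Finset.sum_sub_distrib]
    apply Finset.dvd_sum
    intro r _
    have hc : (((r.val : ℕ) : ℤ) : ZMod n) = ((g r : ℤ) : ZMod n) := by
      rw [hgcast r]
      push_cast
      rw [ZMod.natCast_rightInverse r]
    exact Int.ModEq.dvd ((ZMod.intCast_eq_intCast_iff _ _ _).1 hc)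
  set C : ℤ := ((∑ r : ZMod n, g r) - ((n * (n - 1) / 2 : ℕ) : ℤ)) / (n : ℤ) with hCdef
  have hC : (∑ r : ZMod n, g r) = ((n * (n - 1) / 2 : ℕ) : ℤ) + (n : ℤ) * C := by
    have := Int.mul_ediv_cancel' hdvd
    rw [hCdef]
    linarith
  have hnorm : ∀ z : ℤ, IsNormalised d n (shift d A z) ↔ z = -C := by
    intro z
    unfold IsNormalised
    rw [hsumz z, hC]
    constructor
    · intro h
      have h2 : (n : ℤ) * (C + z) = 0 := by linear_combination h
      rcases mul_eq_zero.1 h2 with h3 | h3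
      · exact absurd h3 (by positivity)
      · linarith
    · intro h
      rw [h]
      ring
  refine ⟨shift d A (-C), ⟨⟨-C, rfl⟩, (hnorm (-C)).2 rfl⟩, ?_⟩
  rintro A'' ⟨⟨z, rfl⟩, hN⟩
  rw [(hnorm z).1 hN]
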